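/- Let V be a unital associative 𝔽-algebra. For an ℓ×ℓ matrix H = (H_{ij}) with entries H_{ij} ∈ V⊗V and F = (F₁,…,F_ℓ) ∈ V^ℓ, define (HF)_i := Σ_{j=1}^{ℓ} H_{ij}′ F_j H_{ij}″ (Sweedler notation). Call H skewadjoint if (H_{ji})^σ = −H_{ij} for all i,j. Let H₀ and H₁ be skewadjoint matrices and let F⁰, F¹, …, F^N ∈ V^ℓ satisfy H₀F^{n+1} = H₁F^n for n = 0,…,N−1. Then for all n,m ∈ {0,…,N} and a ∈ {0,1}: Σ_{i=1}^{ℓ} F^n_i (H_a F^m)_i ∈ [V,V]. -/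

import Mathlib

open TensorProduct LinearMap

section DPA

variable (𝔽 : Type) [Field 𝔽] (V : Type) [Ring V] [Algebra 𝔽 V]

/-- The swap `(u ⊗ v)^σ = v ⊗ u` on `V ⊗ V`. -/
noncomputable abbrev swap2 : V ⊗[𝔽] V ≃ₗ[𝔽] V ⊗[𝔽] V := TensorProduct.comm 𝔽 V V

/-- The cyclic permutation `(u ⊗ v ⊗ w)^σ = w ⊗ u ⊗ v` on `V ⊗ V ⊗ V = (V ⊗ V) ⊗ V`. -/
noncomputable def sigma3 : (V ⊗[𝔽] V) ⊗[𝔽] V ≃ₗ[𝔽] (V ⊗[𝔽] V) ⊗[𝔽] V :=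
  (TensorProduct.comm 𝔽 (V ⊗[𝔽] V) V).trans (TensorProduct.assoc 𝔽 V V V).symm

/-- Left multiplication `a · (u ⊗ v) = (a*u) ⊗ v` (outer bimodule structure). -/
noncomputable def lact2 (a : V) : V ⊗[𝔽] V →ₗ[𝔽] V ⊗[𝔽] V :=
  LinearMap.rTensor V (LinearMap.mulLeft 𝔽 a)

/-- Right multiplication `(u ⊗ v) · c = u ⊗ (v*c)` (outer bimodule structure). -/
noncomputable def ract2 (c : V) : V ⊗[𝔽] V →ₗ[𝔽] V ⊗[𝔽] V :=
  LinearMap.lTensor V (LinearMap.mulRight 𝔽 c)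

/-- `(u ⊗ v) ⋆₁ b = (u*b) ⊗ v`. -/
noncomputable def star1r (b : V) : V ⊗[𝔽] V →ₗ[𝔽] V ⊗[𝔽] V :=
  LinearMap.rTensor V (LinearMap.mulRight 𝔽 b)

/-- `a ⋆₁ (u ⊗ v) = u ⊗ (a*v)`. -/
noncomputable def star1l (a : V) : V ⊗[𝔽] V →ₗ[𝔽] V ⊗[𝔽] V :=
  LinearMap.lTensor V (LinearMap.mulLeft 𝔽 a)

/-- The `•`-product on `V ⊗ V`:  `(u ⊗ v) • (x ⊗ y) = (u*x) ⊗ (y*v)`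
(the multiplication of `V ⊗ Vᵒᵖ`). -/
noncomputable def bullet : V ⊗[𝔽] V →ₗ[𝔽] V ⊗[𝔽] V →ₗ[𝔽] V ⊗[𝔽] V :=
  TensorProduct.lift
    (((TensorProduct.mapBilinear (RingHom.id 𝔽) V V V V).comp (LinearMap.mul 𝔽 V)).compl₂
      ((LinearMap.mul 𝔽 V).flip))

/-- A `2`-fold bracket on `V`: an `𝔽`-bilinear map `V × V → V ⊗ V` satisfying the two
Leibniz rules `{{a,bc}} = {{a,b}}·c + b·{{a,c}}` and `{{ab,c}} = {{a,c}} ⋆₁ b + a ⋆₁ {{b,c}}`. -/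
def IsDoubleBracket (Br : V →ₗ[𝔽] V →ₗ[𝔽] V ⊗[𝔽] V) : Prop :=
  (∀ a b c : V, Br a (b * c) = ract2 𝔽 V c (Br a b) + lact2 𝔽 V b (Br a c)) ∧
  (∀ a b c : V, Br (a * b) c = star1r 𝔽 V b (Br a c) + star1l 𝔽 V a (Br b c))

variable {𝔽 V}

/-- `{{a, B}}_L` : apply the bracket to the first tensor factor. -/
noncomputable def brL (Br : V →ₗ[𝔽] V →ₗ[𝔽] V ⊗[𝔽] V) (a : V) :
    V ⊗[𝔽] V →ₗ[𝔽] (V ⊗[𝔽] V) ⊗[𝔽] V :=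
  LinearMap.rTensor V (Br a)

/-- `{{a, B}}_R` : apply the bracket to the second tensor factor. -/
noncomputable def brR (Br : V →ₗ[𝔽] V →ₗ[𝔽] V ⊗[𝔽] V) (a : V) :
    V ⊗[𝔽] V →ₗ[𝔽] (V ⊗[𝔽] V) ⊗[𝔽] V :=
  (TensorProduct.assoc 𝔽 V V V).symm.toLinearMap ∘ₗ LinearMap.lTensor V (Br a)

variable (𝔽 V)

/-- `ρ₂` : swap the last two tensor factors of `V ⊗ V ⊗ V`. -/
noncomputable def rho2 : (V ⊗[𝔽] V) ⊗[𝔽] V ≃ₗ[𝔽] (V ⊗[𝔽] V) ⊗[𝔽] V :=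
  (TensorProduct.assoc 𝔽 V V V).trans
    ((TensorProduct.congr (LinearEquiv.refl 𝔽 V) (TensorProduct.comm 𝔽 V V)).trans
      (TensorProduct.assoc 𝔽 V V V).symm)

variable {𝔽 V}

/-- Conjugated bullet action used to define the actions `•ᵢ` of `V ⊗ V` on `V ⊗ V ⊗ V`. -/
noncomputable def conjAct (β : V ⊗[𝔽] V →ₗ[𝔽] V ⊗[𝔽] V →ₗ[𝔽] V ⊗[𝔽] V)
    (ρ : (V ⊗[𝔽] V) ⊗[𝔽] V ≃ₗ[𝔽] (V ⊗[𝔽] V) ⊗[𝔽] V) :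
    V ⊗[𝔽] V →ₗ[𝔽] (V ⊗[𝔽] V) ⊗[𝔽] V →ₗ[𝔽] (V ⊗[𝔽] V) ⊗[𝔽] V :=
  (LinearMap.lcomp 𝔽 _ ρ.toLinearMap) ∘ₗ
    (LinearMap.llcomp 𝔽 ((V ⊗[𝔽] V) ⊗[𝔽] V) ((V ⊗[𝔽] V) ⊗[𝔽] V) ((V ⊗[𝔽] V) ⊗[𝔽] V)
      ρ.symm.toLinearMap) ∘ₗ
    (LinearMap.rTensorHom V) ∘ₗ β

variable (𝔽 V)

/-- The right action `X •₁ A`, i.e. `(x⊗y⊗z) •₁ (a⊗b) = x⊗(y*a)⊗(b*z)`;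
`bAct1R A X = X •₁ A`. -/
noncomputable def bAct1R : V ⊗[𝔽] V →ₗ[𝔽] (V ⊗[𝔽] V) ⊗[𝔽] V →ₗ[𝔽] (V ⊗[𝔽] V) ⊗[𝔽] V :=
  conjAct (bullet 𝔽 V).flip ((sigma3 𝔽 V).trans (sigma3 𝔽 V))

/-- The left action `A •₂ X`, i.e. `(a⊗b) •₂ (x⊗y⊗z) = (a*x)⊗y⊗(z*b)`. -/
noncomputable def bAct2L : V ⊗[𝔽] V →ₗ[𝔽] (V ⊗[𝔽] V) ⊗[𝔽] V →ₗ[𝔽] (V ⊗[𝔽] V) ⊗[𝔽] V :=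
  conjAct (bullet 𝔽 V) (rho2 𝔽 V)

/-- The right action `X •₃ A`, i.e. `(x⊗y⊗z) •₃ (a⊗b) = (x*a)⊗(b*y)⊗z`;
`bAct3R A X = X •₃ A`. -/
noncomputable def bAct3R : V ⊗[𝔽] V →ₗ[𝔽] (V ⊗[𝔽] V) ⊗[𝔽] V →ₗ[𝔽] (V ⊗[𝔽] V) ⊗[𝔽] V :=
  conjAct (bullet 𝔽 V).flip (LinearEquiv.refl 𝔽 ((V ⊗[𝔽] V) ⊗[𝔽] V))

/-- `a ⋆₁ (x⊗y⊗z) = x⊗(a*y)⊗z`. -/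
noncomputable def slot2L (a : V) : (V ⊗[𝔽] V) ⊗[𝔽] V →ₗ[𝔽] (V ⊗[𝔽] V) ⊗[𝔽] V :=
  LinearMap.rTensor V (LinearMap.lTensor V (LinearMap.mulLeft 𝔽 a))

/-- `(x⊗y⊗z) ⋆₁ b = x⊗(y*b)⊗z`. -/
noncomputable def slot2R (b : V) : (V ⊗[𝔽] V) ⊗[𝔽] V →ₗ[𝔽] (V ⊗[𝔽] V) ⊗[𝔽] V :=
  LinearMap.rTensor V (LinearMap.lTensor V (LinearMap.mulRight 𝔽 b))

/-- `a ⋆₂ (x⊗y⊗z) = x⊗y⊗(a*z)`. -/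
noncomputable def slot3L (a : V) : (V ⊗[𝔽] V) ⊗[𝔽] V →ₗ[𝔽] (V ⊗[𝔽] V) ⊗[𝔽] V :=
  LinearMap.lTensor (V ⊗[𝔽] V) (LinearMap.mulLeft 𝔽 a)

/-- `(x⊗y⊗z) ⋆₂ b = (x*b)⊗y⊗z`. -/
noncomputable def slot1R (b : V) : (V ⊗[𝔽] V) ⊗[𝔽] V →ₗ[𝔽] (V ⊗[𝔽] V) ⊗[𝔽] V :=
  LinearMap.rTensor V (LinearMap.rTensor V (LinearMap.mulRight 𝔽 b))

/-- outer left: `a · (x⊗y⊗z) = (a*x)⊗y⊗z`. -/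
noncomputable def slot1L (a : V) : (V ⊗[𝔽] V) ⊗[𝔽] V →ₗ[𝔽] (V ⊗[𝔽] V) ⊗[𝔽] V :=
  LinearMap.rTensor V (LinearMap.rTensor V (LinearMap.mulLeft 𝔽 a))

/-- outer right: `(x⊗y⊗z) · b = x⊗y⊗(z*b)`. -/
noncomputable def slot3R (b : V) : (V ⊗[𝔽] V) ⊗[𝔽] V →ₗ[𝔽] (V ⊗[𝔽] V) ⊗[𝔽] V :=
  LinearMap.lTensor (V ⊗[𝔽] V) (LinearMap.mulRight 𝔽 b)

variable {𝔽 V}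

/-- The triple bracket `{{a,b,c}}`. -/
noncomputable def triple (Br : V →ₗ[𝔽] V →ₗ[𝔽] V ⊗[𝔽] V) (a b c : V) :
    (V ⊗[𝔽] V) ⊗[𝔽] V :=
  brL Br a (Br b c) + sigma3 𝔽 V (brL Br b (Br c a)) +
    sigma3 𝔽 V (sigma3 𝔽 V (brL Br c (Br a b)))

variable (𝔽 V)

/-- Skewsymmetry of a 2-fold bracket. -/
def IsSkew (Br : V →ₗ[𝔽] V →ₗ[𝔽] V ⊗[𝔽] V) : Prop :=
  ∀ a b : V, Br a b = - swap2 𝔽 V (Br b a)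

/-- The span of commutators `[V,V]`. -/
def commSub : Submodule 𝔽 V := Submodule.span 𝔽 {x : V | ∃ a b : V, x = a * b - b * a}

variable {𝔽 V}

/-- The associated bracket `{a,b} = m {{a,b}}`. -/
noncomputable def sb (Br : V →ₗ[𝔽] V →ₗ[𝔽] V ⊗[𝔽] V) (a b : V) : V :=
  LinearMap.mul' 𝔽 V (Br a b)

/-- A 2-fold derivation: `D(ab) = (Da)·b + a·(Db)`. -/
def Is2Deriv (D : V →ₗ[𝔽] V ⊗[𝔽] V) : Prop :=
  ∀ a b : V, D (a * b) = ract2 𝔽 V b (D a) + lact2 𝔽 V a (D b)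

/-- `D` and `E` strongly commute: `D_L ∘ E = E_R ∘ D`. -/
def StronglyComm (D E : V →ₗ[𝔽] V ⊗[𝔽] V) : Prop :=
  ∀ f : V, LinearMap.rTensor V D (E f) =
    (TensorProduct.assoc 𝔽 V V V).symm (LinearMap.lTensor V E (D f))


/-- `midMul p (u ⊗ v) = u * p * v`. -/
noncomputable def midMul (𝔽 : Type) [Field 𝔽] (V : Type) [Ring V] [Algebra 𝔽 V]
    (p : V) : V ⊗[𝔽] V →ₗ[𝔽] V :=
  (LinearMap.mul' 𝔽 V) ∘ₗ LinearMap.rTensor V (LinearMap.mulRight 𝔽 p)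

/-- `(HF)_i = Σ_j H_{ij}′ F_j H_{ij}″`. -/
noncomputable def actH (𝔽 : Type) [Field 𝔽] (V : Type) [Ring V] [Algebra 𝔽 V]
    {ℓ : ℕ} (H : Fin ℓ → Fin ℓ → V ⊗[𝔽] V) (F : Fin ℓ → V) (i : Fin ℓ) : V :=
  ∑ j : Fin ℓ, midMul 𝔽 V (F j) (H i j)

section Helpers

variable {𝔽 : Type} [Field 𝔽] {V : Type} [Ring V] [Algebra 𝔽 V]

lemma comm_mem' (a b : V) : a * b - b * a ∈ commSub 𝔽 V :=
  Submodule.subset_span ⟨a, b, rfl⟩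

lemma swap2_swap2 (x : V ⊗[𝔽] V) : swap2 𝔽 V (swap2 𝔽 V x) = x := by
  induction x using TensorProduct.induction_on with
  | zero => simp
  | tmul u v => simp
  | add x y hx hy => simp [map_add, hx, hy]

lemma pair_mem' (f g : V) (x : V ⊗[𝔽] V) :
    f * midMul 𝔽 V g x - g * midMul 𝔽 V f (swap2 𝔽 V x) ∈ commSub 𝔽 V := by
  induction x using TensorProduct.induction_on with
  | zero => simp
  | tmul u v =>
    have h1 : midMul 𝔽 V g (u ⊗ₜ[𝔽] v) = u * g * v := by
      simp [midMul]
    have h2 : midMul 𝔽 V f (swap2 𝔽 V (u ⊗ₜ[𝔽] v)) = v * f * u := by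
      simp [midMul]
    rw [h1, h2]
    have key : f * (u * g * v) - g * (v * f * u) =
        ((f * u * g) * v - v * (f * u * g)) + ((v * f * u) * g - g * (v * f * u)) := by
      noncomm_ring
    rw [key]
    exact add_mem (comm_mem' _ _) (comm_mem' _ _)
  | add x y hx hy =>
    simpa [map_add, mul_add, add_sub_add_comm] using add_mem hx hy

lemma skew_sum' {ℓ : ℕ} (H : Fin ℓ → Fin ℓ → V ⊗[𝔽] V)
    (hskew : ∀ i j, swap2 𝔽 V (H j i) = - H i j) (F G : Fin ℓ → V) :
    (∑ i : Fin ℓ, F i * actH 𝔽 V H G i) + (∑ i : Fin ℓ, G i * actH 𝔽 V H F i)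
      ∈ commSub 𝔽 V := by
  have key : ∀ i j, F i * midMul 𝔽 V (G j) (H i j) + G j * midMul 𝔽 V (F i) (H j i)
      ∈ commSub 𝔽 V := by
    intro i j
    have h1 : H j i = - swap2 𝔽 V (H i j) := by
      apply (swap2 𝔽 V).injective
      rw [hskew i j, map_neg, swap2_swap2]
    rw [h1]
    simpa [sub_eq_add_neg] using pair_mem' (F i) (G j) (H i j)
  have e : (∑ i : Fin ℓ, F i * actH 𝔽 V H G i) + (∑ i : Fin ℓ, G i * actH 𝔽 V H F i)
      = ∑ i : Fin ℓ, ∑ j : Fin ℓ,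
          (F i * midMul 𝔽 V (G j) (H i j) + G j * midMul 𝔽 V (F i) (H j i)) := by
    simp only [actH, Finset.mul_sum, Finset.sum_add_distrib]
    congr 1
    exact Finset.sum_comm
  rw [e]
  exact Submodule.sum_mem _ fun i _ => Submodule.sum_mem _ fun j _ => key i j

lemma self_mem' [CharZero 𝔽] {ℓ : ℕ} (H : Fin ℓ → Fin ℓ → V ⊗[𝔽] V)
    (hskew : ∀ i j, swap2 𝔽 V (H j i) = - H i j) (F : Fin ℓ → V) :
    (∑ i : Fin ℓ, F i * actH 𝔽 V H F i) ∈ commSub 𝔽 V := by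
  have h := skew_sum' H hskew F F
  have h2 : ((2 : 𝔽)) • (∑ i : Fin ℓ, F i * actH 𝔽 V H F i) ∈ commSub 𝔽 V := by
    rw [two_smul]; exact h
  have h3 := Submodule.smul_mem _ ((2 : 𝔽)⁻¹) h2
  rwa [smul_smul, inv_mul_cancel₀ (two_ne_zero), one_smul] at h3

end Helpers

/-- Lenard-Magri orthogonality relations. For skewadjoint matrices
`H₀, H₁` and a Lenard-Magri sequence `F⁰,…,F^N`, all inner products
`Σ_i F^n_i (H_a F^m)_i` lie in `[V,V]`. -/
theorem statement_14 (𝔽 : Type) [Field 𝔽] [CharZero 𝔽] (V : Type) [Ring V] [Algebra 𝔽 V]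
    {ℓ : ℕ} (H0 H1 : Fin ℓ → Fin ℓ → V ⊗[𝔽] V)
    (hskew0 : ∀ i j, swap2 𝔽 V (H0 j i) = - H0 i j)
    (hskew1 : ∀ i j, swap2 𝔽 V (H1 j i) = - H1 i j)
    (N : ℕ) (F : ℕ → Fin ℓ → V)
    (hrec : ∀ n < N, ∀ i, actH 𝔽 V H0 (F (n + 1)) i = actH 𝔽 V H1 (F n) i) :
    ∀ n ≤ N, ∀ m ≤ N,
      (∑ i : Fin ℓ, F n i * actH 𝔽 V H0 (F m) i) ∈ commSub 𝔽 V ∧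
      (∑ i : Fin ℓ, F n i * actH 𝔽 V H1 (F m) i) ∈ commSub 𝔽 V := by
  set C := commSub 𝔽 V with hC
  set S0 : ℕ → ℕ → V := fun n m => ∑ i : Fin ℓ, F n i * actH 𝔽 V H0 (F m) i with hS0
  set S1 : ℕ → ℕ → V := fun n m => ∑ i : Fin ℓ, F n i * actH 𝔽 V H1 (F m) i with hS1
  have hsk0 : ∀ n m, S0 n m + S0 m n ∈ C := fun n m => skew_sum' H0 hskew0 (F n) (F m)
  have hsk1 : ∀ n m, S1 n m + S1 m n ∈ C := fun n m => skew_sum' H1 hskew1 (F n) (F m)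
  have hd0 : ∀ n, S0 n n ∈ C := fun n => self_mem' H0 hskew0 (F n)
  have hd1 : ∀ n, S1 n n ∈ C := fun n => self_mem' H1 hskew1 (F n)
  have hr : ∀ n m, m < N → S0 n (m + 1) = S1 n m := by
    intro n m hm
    exact Finset.sum_congr rfl fun i _ => by rw [hrec m hm i]
  -- From x + y ∈ C and y ∈ C, get x ∈ C
  have hsub : ∀ x y : V, x + y ∈ C → y ∈ C → x ∈ C := by
    intro x y hxy hy
    have := Submodule.sub_mem _ hxy hy
    simpa using this
  have key0 : ∀ d n m, n ≤ N → m ≤ N → n = m + d → S0 n m ∈ C := by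
    intro d
    induction d using Nat.strong_induction_on with
    | _ d ih =>
      intro n m hn hm hnm
      subst hnm
      match d with
      | 0 => exact hd0 m
      | 1 =>
        have hmN : m < N := by omega
        have h1 : S0 m (m + 1) ∈ C := by rw [hr m m hmN]; exact hd1 m
        exact hsub _ _ (hsk0 (m + 1) m) h1
      | (d + 2) =>
        have hA : S0 (m + d + 1) (m + 1) ∈ C :=
          ih d (by omega) (m + d + 1) (m + 1) (by omega) (by omega) (by omega)
        have hB : S1 (m + d + 1) m ∈ C := by
          rw [← hr (m + d + 1) m (by omega)]; exact hA
        have hCm : S1 m (m + d + 1) ∈ C := hsub _ _ (hsk1 m (m + d + 1)) hB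
        have hD : S0 m (m + (d + 2)) ∈ C := by
          have e : m + (d + 2) = (m + d + 1) + 1 := by omega
          rw [e, hr m (m + d + 1) (by omega)]; exact hCm
        exact hsub _ _ (hsk0 (m + (d + 2)) m) hD
  have key0' : ∀ n m, n ≤ N → m ≤ N → S0 n m ∈ C := by
    intro n m hn hm
    rcases le_total m n with h | h
    · exact key0 (n - m) n m hn hm (by omega)
    · exact hsub _ _ (hsk0 n m) (key0 (m - n) m n hm hn (by omega))
  have key1 : ∀ n m, n ≤ N → m ≤ N → S1 n m ∈ C := by
    intro n m hn hm
    rcases lt_or_eq_of_le hm with hmN | rfl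
    · rw [← hr n m hmN]; exact key0' n (m + 1) hn (by omega)
    · rcases lt_or_eq_of_le hn with hnN | rfl
      · have : S1 m n ∈ C := by
          rw [← hr m n hnN]; exact key0' m (n + 1) hm (by omega)
        exact hsub _ _ (hsk1 n m) this
      · exact hd1 n
  intro n hn m hm
  exact ⟨key0' n m hn hm, key1 n m hn hm⟩
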